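/- Let (Ω, 𝒜, P) be a probability space, let n, d ≥ 1 and 1 ≤ m ≤ d, let μ : Fin d → ℝ satisfy 0 < μ j < 1 for every j ≤ m, and let X : Fin n → Fin d → Ω → ℕ have right-repeated structure with midpoint m and parameter μ. Let θ : Ω → Bool satisfy P(θ = true) = 1/2 with θ independent of the whole family (X i j). Let y : Fin d → ℕ and k : Fin d → ℕ satisfy: y j ≤ 1 and y j ≤ k j ≤ n for every j ≤ m, and k j = k m and y j = y m for every j > m. Define E := {ω : if θ(ω) = true then for every j, y j + Σ_{i < n−1} X i j (ω) = k j, else for every j, Σ_{i < n} X i j (ω) = k j}. Then P(E) > 0, P(θ = true | E) < 1, and for every real threshold T: P(θ = true | E) / (1 − P(θ = true | E)) > T if and only if ∏_{j ≤ m} (if y j = 1 then (k j / n) / μ j else (1 − k j / n) / (1 − μ j)) > T. (Half Distributed Correctness: on a population whose attributes above the midpoint are exact copies of attribute m — the half-repeated population being the instance m = ⌊d/2⌋ + 1 — the Bayesian posterior-odds attack with threshold T is equivalent to the likelihood ratio test attack clipped to the first m attributes with the same threshold.) -/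

import Mathlib

open MeasureTheory ProbabilityTheory Finset



lemma hdc_core {Ω : Type*} [MeasurableSpace Ω] (P : Measure Ω) [IsProbabilityMeasure P]
    {α β : Type*} [Fintype α] [Fintype β] [DecidableEq α] [DecidableEq β]
    (X : α × β → Ω → ℕ) (hmeas : ∀ p, Measurable (X p))
    (hInd : iIndepFun X P)
    (h01 : ∀ p ω, X p ω = 0 ∨ X p ω = 1)
    (s : β → Finset α) (r : β → ℕ) :
    P {ω | ∀ j, ∑ i ∈ s j, X (i, j) ω = r j} =
      ∏ j, ∑ t ∈ (s j).powersetCard (r j), ∏ i ∈ s j,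
        P {ω | X (i, j) ω = if i ∈ t then 1 else 0} := by
  classical
  -- the atom of a choice function g
  set c : (β → Finset α) → α × β → Set ℕ := fun g p =>
    if p.1 ∈ s p.2 then {if p.1 ∈ g p.2 then 1 else 0} else Set.univ with hc
  set Atom : (β → Finset α) → Set Ω := fun g => ⋂ p : α × β, X p ⁻¹' (c g p) with hA
  have hAtomMeas : ∀ g, P (Atom g) = ∏ p : α × β, P (X p ⁻¹' (c g p)) := by
    intro g
    refine hInd.meas_iInter (fun p => ?_)
    exact ⟨c g p, by by_cases h : p.1 ∈ s p.2 <;> simp [hc, h], rfl⟩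
  have hF := Fintype.piFinset (fun j => (s j).powersetCard (r j))
  -- event as union of atoms
  have hev : {ω | ∀ j, ∑ i ∈ s j, X (i, j) ω = r j} =
      ⋃ g ∈ Fintype.piFinset (fun j => (s j).powersetCard (r j)), Atom g := by
    ext ω
    simp only [Set.mem_setOf_eq, Set.mem_iUnion]
    constructor
    · intro h
      refine ⟨fun j => (s j).filter (fun i => X (i, j) ω = 1), ?_, ?_⟩
      · rw [Fintype.mem_piFinset]
        intro j
        rw [mem_powersetCard]
        refine ⟨filter_subset _ _, ?_⟩
        have := h j
        rw [← Finset.sum_filter_add_sum_filter_not (s j) (fun i => X (i, j) ω = 1)] at this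
        have h1 : ∑ i ∈ (s j).filter (fun i => X (i, j) ω = 1), X (i, j) ω
            = ((s j).filter (fun i => X (i, j) ω = 1)).card := by
          rw [Finset.card_eq_sum_ones]
          exact Finset.sum_congr rfl (fun i hi => (Finset.mem_filter.mp hi).2)
        have h2 : ∑ i ∈ (s j).filter (fun i => ¬ X (i, j) ω = 1), X (i, j) ω = 0 := by
          refine Finset.sum_eq_zero (fun i hi => ?_)
          rcases h01 (i, j) ω with h' | h'
          · exact h'
          · exact absurd h' (Finset.mem_filter.mp hi).2
        omega
      · refine Set.mem_iInter.mpr (fun p => ?_)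
        simp only [hA, hc, Set.mem_preimage]
        obtain ⟨i0, j0⟩ := p
        by_cases hp : i0 ∈ s j0
        · simp only [hp, if_true, Set.mem_singleton_iff, Finset.mem_filter]
          rcases h01 (i0, j0) ω with h' | h' <;> simp [h', hp]
        · simp [hp]
    · rintro ⟨g, hg, hω⟩
      rw [Fintype.mem_piFinset] at hg
      intro j
      obtain ⟨hsub, hcard⟩ := mem_powersetCard.mp (hg j)
      have hval : ∀ i ∈ s j, X (i, j) ω = if i ∈ g j then 1 else 0 := by
        intro i hi
        have := Set.mem_iInter.mp hω (i, j)
        simp only [hc, Set.mem_preimage, hi, if_true, Set.mem_singleton_iff] at this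
        exact this
      rw [Finset.sum_congr rfl hval, Finset.sum_ite_mem, Finset.inter_comm,
        Finset.sum_const, Finset.inter_eq_left.mpr hsub]
      simp [hcard]
  rw [hev]
  -- pairwise disjoint
  have hdisj : (↑(Fintype.piFinset (fun j => (s j).powersetCard (r j))) :
      Set (β → Finset α)).PairwiseDisjoint Atom := by
    intro g hg g' hg' hne
    rw [Finset.mem_coe, Fintype.mem_piFinset] at hg hg'
    rw [Function.onFun, Set.disjoint_left]
    intro ω hω hω'
    have : ∃ j, g j ≠ g' j := by
      by_contra h; push_neg at h; exact hne (funext h)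
    obtain ⟨j, hj⟩ := this
    have hgs : g j ⊆ s j := (mem_powersetCard.mp (hg j)).1
    have hgs' : g' j ⊆ s j := (mem_powersetCard.mp (hg' j)).1
    have : ∃ i ∈ s j, (i ∈ g j ↔ ¬ i ∈ g' j) ∨ (i ∈ g' j ↔ ¬ i ∈ g j) := by
      by_contra h; push_neg at h
      refine hj (Finset.ext fun i => ?_)
      by_cases hi : i ∈ s j
      · have := h i hi; tauto
      · constructor
        · intro h'; exact absurd (hgs h') hi
        · intro h'; exact absurd (hgs' h') hi
    obtain ⟨i, hi, hcases⟩ := this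
    have v1 := Set.mem_iInter.mp hω (i, j)
    have v2 := Set.mem_iInter.mp hω' (i, j)
    simp only [hc, Set.mem_preimage, hi, if_true, Set.mem_singleton_iff] at v1 v2
    rcases hcases with h | h <;>
      · by_cases hij : i ∈ g j <;> by_cases hij' : i ∈ g' j <;>
          simp [hij, hij'] at v1 v2 h <;> omega
  have hmeasA : ∀ g, MeasurableSet (Atom g) := by
    intro g
    refine MeasurableSet.iInter (fun p => (hmeas p) ?_)
    by_cases h : p.1 ∈ s p.2 <;> simp [hc, h] <;> exact MeasurableSet.univ
  rw [measure_biUnion_finset hdisj (fun g _ => hmeasA g)]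
  have : ∀ g ∈ Fintype.piFinset (fun j => (s j).powersetCard (r j)),
      P (Atom g) = ∏ j, ∏ i ∈ s j, P {ω | X (i, j) ω = if i ∈ g j then 1 else 0} := by
    intro g hg
    rw [hAtomMeas g]
    rw [Fintype.prod_prod_type_right]
    refine Finset.prod_congr rfl (fun j _ => ?_)
    have : ∀ i : α, P (X (i, j) ⁻¹' (c g (i, j))) =
        if i ∈ s j then P {ω | X (i, j) ω = if i ∈ g j then 1 else 0} else 1 := by
      intro i
      by_cases h : i ∈ s j
      · simp only [hc, h, if_true]
        congr 1
      · simp [hc, h]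
    rw [Finset.prod_congr rfl (fun i _ => this i), Finset.prod_ite_mem,
      Finset.univ_inter]
  rw [Finset.sum_congr rfl this, Finset.prod_univ_sum]


lemma hdc_eval {M : Type*} [CommSemiring M] {α : Type*} [DecidableEq α]
    (s : Finset α) (r : ℕ) (a b : M) :
    ∑ t ∈ s.powersetCard r, ∏ i ∈ s, (if i ∈ t then a else b) =
      (s.card.choose r) * a ^ r * b ^ (s.card - r) := by
  have h : ∀ t ∈ s.powersetCard r, ∏ i ∈ s, (if i ∈ t then a else b)
      = a ^ r * b ^ (s.card - r) := by
    intro t ht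
    obtain ⟨hsub, hcard⟩ := mem_powersetCard.mp ht
    rw [← Finset.prod_sdiff hsub]
    have h1 : ∏ i ∈ s \ t, (if i ∈ t then a else b) = b ^ (s.card - r) := by
      rw [Finset.prod_congr rfl (fun i hi => if_neg (Finset.mem_sdiff.mp hi).2),
        Finset.prod_const, Finset.card_sdiff_of_subset hsub, hcard]
    have h2 : ∏ i ∈ t, (if i ∈ t then a else b) = a ^ r := by
      rw [Finset.prod_congr rfl (fun i hi => if_pos hi), Finset.prod_const, hcard]
    rw [h1, h2]; ring
  rw [Finset.sum_congr rfl h, Finset.sum_const, Finset.card_powersetCard,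
    nsmul_eq_mul]; ring

lemma hdc_ratio (n k y : ℕ) (hn : 1 ≤ n) {μ : ℝ} (h0 : 0 < μ) (h1 : μ < 1)
    (hy : y ≤ 1) (hyk : y ≤ k) (hkn : k ≤ n) :
    (((n - 1).choose (k - y) : ℝ) * μ ^ (k - y) * (1 - μ) ^ (n - 1 - (k - y))) =
    (if y = 1 then ((k : ℝ) / n) / μ else (1 - (k : ℝ) / n) / (1 - μ)) *
      ((n.choose k : ℝ) * μ ^ k * (1 - μ) ^ (n - k)) := by
  have hμ1 : (0 : ℝ) < 1 - μ := by linarith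
  have hn0 : (n : ℝ) ≠ 0 := Nat.cast_ne_zero.mpr (by omega)
  interval_cases y
  · rw [if_neg (by norm_num)]
    simp only [Nat.sub_zero]
    rcases eq_or_lt_of_le hkn with rfl | hkn'
    · rw [Nat.choose_eq_zero_of_lt (by omega)]
      rw [div_self hn0]
      norm_num
    · have hnat : n * (n - 1).choose k = n.choose k * (n - k) := by
        have h := Nat.add_one_mul_choose_eq (n - 1) k
        have e1 : n - 1 + 1 = n := by omega
        rw [e1] at h
        rw [h, Nat.choose_succ_right_eq]
      have hc : ((n : ℝ)) * ((n - 1).choose k : ℝ) = (n.choose k : ℝ) * ((n : ℝ) - k) := by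
        have := congrArg (Nat.cast : ℕ → ℝ) hnat
        push_cast [Nat.cast_sub hkn] at this
        exact this
      have hpow : (1 - μ) ^ (n - k) = (1 - μ) ^ (n - 1 - k) * (1 - μ) := by
        rw [← pow_succ]; congr 1; omega
      have h2 : (1 - (k : ℝ) / n) = ((n : ℝ) - k) / n := by field_simp
      rw [hpow, h2]
      field_simp
      linear_combination hc
  · rw [if_pos rfl]
    have hk1 : 1 ≤ k := hyk
    have hnat : n * (n - 1).choose (k - 1) = n.choose k * k := by
      have h := Nat.add_one_mul_choose_eq (n - 1) (k - 1)
      have e1 : n - 1 + 1 = n := by omega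
      have e2 : k - 1 + 1 = k := by omega
      simp only [Nat.succ_eq_add_one, e1, e2] at h
      exact h
    have hc : ((n : ℝ)) * ((n - 1).choose (k - 1) : ℝ) = (n.choose k : ℝ) * k := by
      have := congrArg (Nat.cast : ℕ → ℝ) hnat
      push_cast at this
      exact this
    have hpow : μ ^ k = μ ^ (k - 1) * μ := by
      rw [← pow_succ]; congr 1; omega
    have he : n - 1 - (k - 1) = n - k := by omega
    rw [he, hpow]
    field_simp
    linear_combination hc


/-- `X : Fin n → Fin d → Ω → ℕ` has *right-repeated structure* with midpoint `m`
(in one-based terms, `1 ≤ m ≤ d`, corresponding to the zero-based index `m - 1`)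
and parameter `μ`: the subfamily `(X i j)` over all records `i` and attributes
`j ≤ m` (zero-based `(j : ℕ) < m`) is mutually independent, each such `X i j` is
`{0,1}`-valued with `P(X i j = 1) = μ j`, and every attribute `j > m` (zero-based
`m ≤ (j : ℕ)`) is an exact copy of attribute `m` (zero-based index `m - 1`). -/
def RightRepeated {Ω : Type*} [MeasurableSpace Ω] (P : Measure Ω)
    {n d : ℕ} (m : ℕ) (X : Fin n → Fin d → Ω → ℕ) (μ : Fin d → ℝ) : Prop :=
  (∀ i j, Measurable (X i j)) ∧
  iIndepFun
    (fun p : Fin n × {j : Fin d // (j : ℕ) < m} => X p.1 p.2.1) P ∧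
  (∀ i, ∀ j : Fin d, (j : ℕ) < m →
    (∀ ω, X i j ω = 0 ∨ X i j ω = 1) ∧ (P {ω | X i j ω = 1}).toReal = μ j) ∧
  (∀ i, ∀ j : Fin d, m ≤ (j : ℕ) →
    ∀ jm : Fin d, (jm : ℕ) = m - 1 → X i j = X i jm)

/-- **Half Distributed Correctness.** On a population whose attributes above the
midpoint `m` are exact copies of attribute `m` (the half-repeated population
being `m = ⌊d/2⌋ + 1`), the Bayesian posterior-odds attack with threshold `T`
is equivalent to the likelihood ratio test attack clipped to the first `m`
attributes with the same threshold. -/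
theorem half_distributed_correctness {Ω : Type*} [MeasurableSpace Ω]
    (P : Measure Ω) [IsProbabilityMeasure P] (n d m : ℕ)
    (hn : 1 ≤ n) (hd : 1 ≤ d) (hm : 1 ≤ m) (hmd : m ≤ d)
    (μ : Fin d → ℝ) (hμ : ∀ j : Fin d, (j : ℕ) < m → 0 < μ j ∧ μ j < 1)
    (X : Fin n → Fin d → Ω → ℕ) (hX : RightRepeated P m X μ)
    (θ : Ω → Bool) (hθmeas : Measurable θ)
    (hθhalf : (P {ω | θ ω = true}).toReal = 1 / 2)
    (hθindep : IndepFun θ (fun ω (p : Fin n × Fin d) => X p.1 p.2 ω) P)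
    (y : Fin d → ℕ) (k : Fin d → ℕ)
    (hyk : ∀ j : Fin d, (j : ℕ) < m → y j ≤ 1 ∧ y j ≤ k j ∧ k j ≤ n)
    (hrep : ∀ j : Fin d, m ≤ (j : ℕ) →
      k j = k ⟨m - 1, by omega⟩ ∧ y j = y ⟨m - 1, by omega⟩)
    (E : Set Ω)
    (hE : E = {ω | if θ ω = true
      then ∀ j, y j + ∑ i ∈ univ.filter (fun i : Fin n => (i : ℕ) < n - 1),
        X i j ω = k j
      else ∀ j, (∑ i : Fin n, X i j ω) = k j}) :
    0 < (P E).toReal ∧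
    (P[{ω | θ ω = true} | E]).toReal < 1 ∧
    ∀ T : ℝ,
      (P[{ω | θ ω = true} | E]).toReal /
          (1 - (P[{ω | θ ω = true} | E]).toReal) > T ↔
      (∏ j ∈ univ.filter (fun j : Fin d => (j : ℕ) < m),
        (if y j = 1 then ((k j : ℝ) / n) / μ j
          else (1 - (k j : ℝ) / n) / (1 - μ j))) > T := by
  classical
  obtain ⟨hmeas, hInd, h01μ, hcopy⟩ := hX
  have hjmlt : m - 1 < d := by omega
  set jm : Fin d := ⟨m - 1, hjmlt⟩ with hjmdef
  have hjm_lt : (jm : ℕ) < m := by simp only [hjmdef]; omega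
  set Ss : Finset (Fin n) := univ.filter (fun i : Fin n => (i : ℕ) < n - 1) with hSs
  have hSscard : Ss.card = n - 1 := by
    have hemb : Function.Injective
        (fun a : Fin (n - 1) => (⟨a.1, a.2.trans_le (Nat.sub_le n 1)⟩ : Fin n)) := by
      intro a b hab
      simp only [Fin.mk.injEq] at hab
      exact Fin.ext hab
    have hS : Ss = (univ : Finset (Fin (n - 1))).map ⟨_, hemb⟩ := by
      ext i
      simp only [hSs, mem_filter, mem_univ, true_and, mem_map,
        Function.Embedding.coeFn_mk]
      constructor
      · intro h; exact ⟨⟨i.1, h⟩, Fin.ext rfl⟩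
      · rintro ⟨a, rfl⟩; exact a.2
    rw [hS, card_map, card_univ, Fintype.card_fin]
  -- basic measure values
  have hP1 : ∀ (i : Fin n) (j : Fin d), (j : ℕ) < m →
      P {ω | X i j ω = 1} = ENNReal.ofReal (μ j) := by
    intro i j hj
    rw [← (h01μ i j hj).2, ENNReal.ofReal_toReal (measure_ne_top P _)]
  have hmeas1 : ∀ (i : Fin n) (j : Fin d), MeasurableSet {ω | X i j ω = 1} :=
    fun i j => hmeas i j (measurableSet_singleton 1)
  have hP0 : ∀ (i : Fin n) (j : Fin d), (j : ℕ) < m →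
      P {ω | X i j ω = 0} = ENNReal.ofReal (1 - μ j) := by
    intro i j hj
    have hcompl : {ω | X i j ω = 0} = {ω | X i j ω = 1}ᶜ := by
      ext ω
      simp only [Set.mem_setOf_eq, Set.mem_compl_iff]
      rcases (h01μ i j hj).1 ω with h | h <;> simp [h]
    rw [hcompl, measure_compl (hmeas1 i j) (measure_ne_top P _), hP1 i j hj,
      measure_univ, ENNReal.ofReal_sub _ (le_of_lt (hμ j hj).1), ENNReal.ofReal_one]
  -- per-attribute block formula
  have hblock : ∀ (j : Fin d), (j : ℕ) < m → ∀ (S : Finset (Fin n)) (r : ℕ),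
      (∑ t ∈ S.powersetCard r, ∏ i ∈ S,
        P {ω | X i j ω = if i ∈ t then 1 else 0}).toReal
      = (S.card.choose r : ℝ) * μ j ^ r * (1 - μ j) ^ (S.card - r) := by
    intro j hj S r
    have h1 : ∀ t ∈ S.powersetCard r, ∏ i ∈ S, P {ω | X i j ω = if i ∈ t then 1 else 0}
        = ∏ i ∈ S, (if i ∈ t then ENNReal.ofReal (μ j) else ENNReal.ofReal (1 - μ j)) := by
      intro t _
      refine Finset.prod_congr rfl (fun i _ => ?_)
      by_cases h : i ∈ t
      · simp only [h, if_true]; exact hP1 i j hj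
      · simp only [h, if_false]; exact hP0 i j hj
    rw [Finset.sum_congr rfl h1, hdc_eval]
    rw [ENNReal.toReal_mul, ENNReal.toReal_mul, ENNReal.toReal_pow, ENNReal.toReal_pow,
      ENNReal.toReal_natCast, ENNReal.toReal_ofReal (le_of_lt (hμ j hj).1),
      ENNReal.toReal_ofReal (by linarith [(hμ j hj).2])]
  -- the two core events
  set J := {j : Fin d // (j : ℕ) < m} with hJ
  set Acore : Set Ω := {ω | ∀ j : J, ∑ i ∈ Ss, X i j.1 ω = k j.1 - y j.1} with hAcore
  set Bcore : Set Ω := {ω | ∀ j : J, ∑ i : Fin n, X i j.1 ω = k j.1} with hBcore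
  set fA : J → ℝ := fun j => ((n - 1).choose (k j.1 - y j.1) : ℝ) *
    μ j.1 ^ (k j.1 - y j.1) * (1 - μ j.1) ^ (n - 1 - (k j.1 - y j.1)) with hfA
  set fB : J → ℝ := fun j => (n.choose (k j.1) : ℝ) *
    μ j.1 ^ (k j.1) * (1 - μ j.1) ^ (n - k j.1) with hfB
  have hPAval : (P Acore).toReal = ∏ j : J, fA j := by
    have h := hdc_core P (fun p : Fin n × J => X p.1 p.2.1)
      (fun p => hmeas p.1 p.2.1) hInd (fun p ω => (h01μ p.1 p.2.1 p.2.2).1 ω)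
      (fun _ : J => Ss) (fun j : J => k j.1 - y j.1)
    have hset : Acore = {ω | ∀ j : J, ∑ i ∈ (fun _ : J => Ss) j,
        (fun p : Fin n × J => X p.1 p.2.1) (i, j) ω = k j.1 - y j.1} := rfl
    rw [hset, h, ENNReal.toReal_prod]
    refine Finset.prod_congr rfl (fun j _ => ?_)
    have := hblock j.1 j.2 Ss (k j.1 - y j.1)
    rw [hSscard] at this
    exact this
  have hPBval : (P Bcore).toReal = ∏ j : J, fB j := by
    have h := hdc_core P (fun p : Fin n × J => X p.1 p.2.1)
      (fun p => hmeas p.1 p.2.1) hInd (fun p ω => (h01μ p.1 p.2.1 p.2.2).1 ω)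
      (fun _ : J => (univ : Finset (Fin n))) (fun j : J => k j.1)
    have hset : Bcore = {ω | ∀ j : J, ∑ i ∈ (fun _ : J => (univ : Finset (Fin n))) j,
        (fun p : Fin n × J => X p.1 p.2.1) (i, j) ω = k j.1} := rfl
    rw [hset, h, ENNReal.toReal_prod]
    refine Finset.prod_congr rfl (fun j _ => ?_)
    have := hblock j.1 j.2 univ (k j.1)
    rw [card_univ, Fintype.card_fin] at this
    exact this
  -- ratio per attribute
  have hratio : ∀ j : J, fA j = (if y j.1 = 1 then ((k j.1 : ℝ) / n) / μ j.1
      else (1 - (k j.1 : ℝ) / n) / (1 - μ j.1)) * fB j := by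
    intro j
    exact hdc_ratio n (k j.1) (y j.1) hn (hμ j.1 j.2).1 (hμ j.1 j.2).2
      (hyk j.1 j.2).1 (hyk j.1 j.2).2.1 (hyk j.1 j.2).2.2
  set L : ℝ := ∏ j ∈ univ.filter (fun j : Fin d => (j : ℕ) < m),
    (if y j = 1 then ((k j : ℝ) / n) / μ j else (1 - (k j : ℝ) / n) / (1 - μ j)) with hL
  have hLsub : L = ∏ j : J, (if y j.1 = 1 then ((k j.1 : ℝ) / n) / μ j.1
      else (1 - (k j.1 : ℝ) / n) / (1 - μ j.1)) := by
    rw [hL]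
    exact Finset.prod_subtype _ (fun x => by simp) _
  set pA : ℝ := (P Acore).toReal with hpA
  set pB : ℝ := (P Bcore).toReal with hpB
  have hAB : pA = L * pB := by
    rw [hPAval, hPBval, hLsub, ← Finset.prod_mul_distrib]
    exact Finset.prod_congr rfl (fun j _ => hratio j)
  have hpBpos : 0 < pB := by
    rw [hPBval]
    refine Finset.prod_pos (fun j _ => ?_)
    have h0 := (hμ j.1 j.2).1
    have h1 := (hμ j.1 j.2).2
    have hc : 0 < (n.choose (k j.1) : ℝ) :=
      Nat.cast_pos.mpr (Nat.choose_pos (hyk j.1 j.2).2.2)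
    have := pow_pos h0 (k j.1)
    have := pow_pos (by linarith : (0:ℝ) < 1 - μ j.1) (n - k j.1)
    positivity
  have hpAnn : 0 ≤ pA := ENNReal.toReal_nonneg
  -- event decomposition
  set Sθ : Set Ω := {ω | θ ω = true} with hSθ
  have hmθ : MeasurableSet Sθ := hθmeas (measurableSet_singleton true)
  -- rewriting E's branches via copies
  have hAeq : {ω | ∀ j : Fin d, y j + ∑ i ∈ Ss, X i j ω = k j} = Acore := by
    ext ω
    simp only [hAcore, Set.mem_setOf_eq]
    constructor
    · intro h j
      have h1 := h j.1
      have h2 := (hyk j.1 j.2).2.1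
      omega
    · intro h j
      by_cases hj : (j : ℕ) < m
      · have h1 : ∑ i ∈ Ss, X i j ω = k j - y j := h ⟨j, hj⟩
        have h2 := (hyk j hj).2.1
        omega
      · push_neg at hj
        have hxeq : ∀ i, X i j ω = X i jm ω := fun i => by
          rw [hcopy i j hj jm rfl]
        rw [Finset.sum_congr rfl (fun i _ => hxeq i)]
        have hk' : k j = k jm := (hrep j hj).1
        have hy' : y j = y jm := (hrep j hj).2
        rw [hk', hy']
        have h1 : ∑ i ∈ Ss, X i jm ω = k jm - y jm := h ⟨jm, hjm_lt⟩
        have h2 := (hyk jm hjm_lt).2.1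
        omega
  have hBeq : {ω | ∀ j : Fin d, ∑ i : Fin n, X i j ω = k j} = Bcore := by
    ext ω
    simp only [hBcore, Set.mem_setOf_eq]
    constructor
    · intro h j; exact h j.1
    · intro h j
      by_cases hj : (j : ℕ) < m
      · exact h ⟨j, hj⟩
      · push_neg at hj
        have hxeq : ∀ i, X i j ω = X i jm ω := fun i => by
          rw [hcopy i j hj jm rfl]
        rw [Finset.sum_congr rfl (fun i _ => hxeq i)]
        have hk' : k j = k jm := (hrep j hj).1
        rw [hk']
        exact h ⟨jm, hjm_lt⟩
  have hEeq : E = (Sθ ∩ Acore) ∪ (Sθᶜ ∩ Bcore) := by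
    rw [hE, ← hAeq, ← hBeq]
    ext ω
    simp only [Set.mem_setOf_eq, Set.mem_union, Set.mem_inter_iff, Set.mem_compl_iff,
      hSθ]
    cases hθω : θ ω <;> simp [hθω]
  -- measurability of the core events
  have htuple : Measurable (fun ω (p : Fin n × Fin d) => X p.1 p.2 ω) :=
    measurable_pi_lambda _ (fun p => hmeas p.1 p.2)
  set SA : Set ((Fin n × Fin d) → ℕ) :=
    {v | ∀ j : J, ∑ i ∈ Ss, v (i, j.1) = k j.1 - y j.1} with hSA
  set SB : Set ((Fin n × Fin d) → ℕ) :=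
    {v | ∀ j : J, ∑ i : Fin n, v (i, j.1) = k j.1} with hSB
  have hSAmeas : MeasurableSet SA := by
    have : SA = ⋂ j : J, (fun v : (Fin n × Fin d) → ℕ => ∑ i ∈ Ss, v (i, j.1)) ⁻¹'
        {k j.1 - y j.1} := by
      ext v; simp [hSA, Set.mem_iInter]
    rw [this]
    refine MeasurableSet.iInter fun j => ?_
    have hms : Measurable (fun v : (Fin n × Fin d) → ℕ => ∑ i ∈ Ss, v (i, j.1)) :=
      Finset.measurable_sum Ss (fun i _ => measurable_pi_apply (i, j.1))
    exact hms (measurableSet_singleton _)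
  have hSBmeas : MeasurableSet SB := by
    have : SB = ⋂ j : J, (fun v : (Fin n × Fin d) → ℕ => ∑ i : Fin n, v (i, j.1)) ⁻¹'
        {k j.1} := by
      ext v; simp [hSB, Set.mem_iInter]
    rw [this]
    refine MeasurableSet.iInter fun j => ?_
    have hms : Measurable (fun v : (Fin n × Fin d) → ℕ => ∑ i : Fin n, v (i, j.1)) :=
      Finset.measurable_sum univ (fun i _ => measurable_pi_apply (i, j.1))
    exact hms (measurableSet_singleton _)
  have hApre : Acore = (fun ω (p : Fin n × Fin d) => X p.1 p.2 ω) ⁻¹' SA := rfl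
  have hBpre : Bcore = (fun ω (p : Fin n × Fin d) => X p.1 p.2 ω) ⁻¹' SB := rfl
  have hmA : MeasurableSet Acore := hApre ▸ htuple hSAmeas
  have hmB : MeasurableSet Bcore := hBpre ▸ htuple hSBmeas
  have hmE : MeasurableSet E := by
    rw [hEeq]
    exact (hmθ.inter hmA).union (hmθ.compl.inter hmB)
  -- independence splits
  have hIA : P (Sθ ∩ Acore) = P Sθ * P Acore := by
    have hpre : Sθ = θ ⁻¹' {true} := rfl
    rw [hpre, hApre]
    exact hθindep.measure_inter_preimage_eq_mul {true} SA
      (measurableSet_singleton true) hSAmeas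
  have hIB : P (Sθᶜ ∩ Bcore) = P Sθᶜ * P Bcore := by
    have hpre : Sθᶜ = θ ⁻¹' {false} := by
      ext ω; simp [hSθ, Bool.not_eq_true]
    rw [hpre, hBpre]
    exact hθindep.measure_inter_preimage_eq_mul {false} SB
      (measurableSet_singleton false) hSBmeas
  have hPθf : (P Sθᶜ).toReal = 1 / 2 := by
    rw [measure_compl hmθ (measure_ne_top P _), measure_univ,
      ENNReal.toReal_sub_of_le prob_le_one ENNReal.one_ne_top]
    rw [ENNReal.toReal_one, hθhalf]
    norm_num
  -- total probability of E
  have hdisjE : Disjoint (Sθ ∩ Acore) (Sθᶜ ∩ Bcore) := by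
    rw [Set.disjoint_left]
    rintro ω ⟨h1, -⟩ ⟨h2, -⟩
    exact h2 h1
  have hpE : (P E).toReal = 1 / 2 * pA + 1 / 2 * pB := by
    rw [hEeq, measure_union hdisjE (hmθ.compl.inter hmB),
      ENNReal.toReal_add (measure_ne_top P _) (measure_ne_top P _),
      hIA, hIB, ENNReal.toReal_mul, ENNReal.toReal_mul, hθhalf, hPθf, ← hpA, ← hpB]
  have hpEpos : 0 < (P E).toReal := by rw [hpE]; linarith
  refine ⟨hpEpos, ?_⟩
  have hPEne : P E ≠ 0 := by
    intro h
    rw [h] at hpEpos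
    simp at hpEpos
  have hEt : E ∩ Sθ = Sθ ∩ Acore := by
    rw [hEeq]
    ext ω
    simp only [Set.mem_inter_iff, Set.mem_union, Set.mem_compl_iff]
    tauto
  set q : ℝ := (P[Sθ | E]).toReal with hq
  have hqval : q = pA / (pA + pB) := by
    rw [hq, cond_apply hmE P Sθ, hEt, hIA, ENNReal.toReal_mul, ENNReal.toReal_mul,
      ENNReal.toReal_inv, hθhalf, hpE, ← hpA]
    rw [inv_mul_eq_div]
    rw [div_eq_div_iff (by linarith) (by linarith)]
    ring
  have hq1 : q < 1 := by
    rw [hqval]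
    rw [div_lt_one (by linarith)]
    linarith
  refine ⟨hq1, fun T => ?_⟩
  have h1q : 1 - q = pB / (pA + pB) := by
    rw [hqval]
    field_simp
    ring
  have hodds : q / (1 - q) = L := by
    rw [h1q, hqval, div_div_div_comm, div_self (by linarith : pA + pB ≠ 0), div_one,
      hAB, mul_div_cancel_right₀ _ (ne_of_gt hpBpos)]
  rw [hodds]
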